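/- For all points x, y in the unit disk of the complex plane, the triangular ratio metric satisfies s(x,y) ≤ |x−y|/(2−|x+y|), i.e. |x−y|·(2−|x+y|)⁻¹ is an upper bound for |x−y|/inf_{|z|=1}(|x−z|+|z−y|). -/

import Mathlib

open Complex

/-- Triangular ratio "metric" of the unit disk. -/
noncomputable def sB (x y : ℂ) : ℝ :=
  ‖x - y‖ /
    sInf ((fun z => ‖x - z‖ + ‖z - y‖) '' {z : ℂ | ‖z‖ = 1})

theorem stmt_0 (x y : ℂ) (hx : ‖x‖ < 1) (hy : ‖y‖ < 1) :
    sB x y ≤ ‖x - y‖ / (2 - ‖x + y‖) := by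
  have hb : 0 < 2 - ‖x + y‖ := by
    have := norm_add_le x y
    linarith
  have hle : 2 - ‖x + y‖ ≤
      sInf ((fun z => ‖x - z‖ + ‖z - y‖) '' {z : ℂ | ‖z‖ = 1}) := by
    apply le_csInf
    · exact ⟨‖x - 1‖ + ‖1 - y‖, ⟨1, by simp, rfl⟩⟩
    · rintro b ⟨z, hz, rfl⟩
      simp only [Set.mem_setOf_eq] at hz
      have h1 : ‖2 * z - (x + y)‖ ≤ ‖x - z‖ + ‖z - y‖ := by
        have : (2 : ℂ) * z - (x + y) = -(x - z) + (z - y) := by ring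
        rw [this]
        calc ‖-(x - z) + (z - y)‖ ≤ ‖-(x - z)‖ + ‖z - y‖ :=
              norm_add_le _ _
          _ = ‖x - z‖ + ‖z - y‖ := by rw [norm_neg]
      have h2 : 2 - ‖x + y‖ ≤ ‖2 * z - (x + y)‖ := by
        have h4 := norm_add_le (2 * z - (x + y)) (x + y)
        rw [sub_add_cancel] at h4
        have h3 : ‖2 * z‖ = 2 := by
          rw [norm_mul, hz]; simp
        linarith
      show 2 - ‖x + y‖ ≤ ‖x - z‖ + ‖z - y‖
      linarith
  unfold sB
  exact div_le_div_of_nonneg_left (norm_nonneg _) hb hle
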